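/- Let x ∈ {0,1}^N with the natural association to a weighted bipartite graph structure as follows: for sets X = {x : |x| = ⌊n/8⌋ − 1} and Y = {x : |x| = ⌊n/8⌋ + 1} of strings in {0,1}^{n/4} (with n ≥ 8 a multiple of 4), and tuple x = (x^(1),...,x^(3n/4)) ∈ (X ∪ Y)^{3n/4}, define the bipartite graph G_x on L ⊔ R with |L| = 3n/4, |R| = n/4, and weights w_x({i, j}) = 1 + ε·x^(i)(j − 3n/4) ∈ {1, 1+ε} for i ∈ L, j ∈ R, where 0 < ε ≤ 1. Then: λ(G_x) = n/4 + ε(⌊n/8⌋ + 1) if all x^(i) ∈ Y, and λ(G_x) = n/4 + ε(⌊n/8⌋ − 1) if some x^(i) ∈ X. In particular, λ(G_x) determines whether all blocks x^(i) have Hamming weight ⌊n/8⌋+1 or some block has Hamming weight ⌊n/8⌋−1. -/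

import Mathlib

open Classical in
/-- The weight of the cut with shore `X` in the weighted graph `(V, w)`. -/
noncomputable def cutWeight {V : Type*} [Fintype V] (w : V → V → ℝ) (X : Set V) : ℝ :=
  ∑ u : V, ∑ v : V, if u ∈ X ∧ v ∉ X then w u v else 0

open Classical Finset

lemma ncard_eq_filter {V : Type*} [Fintype V] (s : Set V) :
    s.ncard = (univ.filter (· ∈ s)).card := by
  classical
  rw [Set.ncard_eq_toFinset_card']
  congr 1
  ext a; simp

lemma cutWeight_eq_sum {V : Type*} [Fintype V] (w : V → V → ℝ) (Z : Set V) :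
    cutWeight w Z = ∑ u ∈ univ.filter (· ∈ Z), ∑ v ∈ (univ.filter (· ∈ Z))ᶜ, w u v := by
  classical
  unfold cutWeight
  rw [Finset.sum_filter]
  refine Finset.sum_congr rfl fun u _ => ?_
  by_cases hu : u ∈ Z
  · simp only [hu, true_and, if_true]
    rw [Finset.compl_filter, Finset.sum_filter]
  · simp [hu]

lemma cutWeight_compl {V : Type*} [Fintype V] (w : V → V → ℝ)
    (hsymm : ∀ a b, w a b = w b a) (Z : Set V) :
    cutWeight w Zᶜ = cutWeight w Z := by
  classical
  unfold cutWeight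
  rw [Finset.sum_comm]
  refine Finset.sum_congr rfl fun u _ => Finset.sum_congr rfl fun v _ => ?_
  by_cases hu : u ∈ Z <;> by_cases hv : v ∈ Z <;>
    simp [hu, hv, hsymm v u, Set.mem_compl_iff]

lemma double_sum_ge {V : Type*} [Fintype V] (A B : Finset V) (f : V → V → ℝ)
    (h : ∀ u ∈ A, ∀ v ∈ B, 1 ≤ f u v) :
    (A.card * B.card : ℝ) ≤ ∑ u ∈ A, ∑ v ∈ B, f u v := by
  calc (A.card * B.card : ℝ) = ∑ _u ∈ A, (B.card : ℝ) := by
        rw [Finset.sum_const, nsmul_eq_mul]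
      _ ≤ _ := by
        refine Finset.sum_le_sum fun u hu => ?_
        calc (B.card : ℝ) = ∑ _v ∈ B, (1:ℝ) := by simp
          _ ≤ _ := Finset.sum_le_sum (h u hu)

lemma filter_split_card {V : Type*} [Fintype V] (s : Finset V) (p : V → Prop) [DecidablePred p] :
    (s.filter p).card + (sᶜ.filter p).card = (univ.filter p).card := by
  rw [← Finset.card_union_of_disjoint
      (Finset.disjoint_filter_filter disjoint_compl_right),
    ← Finset.filter_union, Finset.union_compl]

lemma cut_singleton {V : Type*} [Fintype V]
    (ε : ℝ) (L : Set V) (S : V → Set V) (hSR : ∀ i ∈ L, S i ⊆ Lᶜ)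
    (w : V → V → ℝ)
    (hinL : ∀ a ∈ L, ∀ b ∈ L, w a b = 0)
    (hcross : ∀ i ∈ L, ∀ j ∉ L, w i j = 1 + if j ∈ S i then ε else 0)
    (i : V) (hi : i ∈ L) :
    cutWeight w {i} = ((univ.filter (· ∉ L)).card : ℝ) + ε * (S i).ncard := by
  classical
  rw [cutWeight_eq_sum]
  have h1 : @Finset.filter V (· ∈ ({i} : Set V)) (fun _ => Classical.propDecidable _) univ = {i} := by
    ext a; simp
  rw [h1, Finset.sum_singleton]
  have h2 : ∑ v ∈ ({i} : Finset V)ᶜ, w i v = ∑ v : V, w i v := by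
    rw [← Finset.sum_compl_add_sum ({i} : Finset V)]
    simp [hinL i hi i hi]
  rw [h2, ← Finset.sum_filter_add_sum_filter_not univ (· ∈ L)]
  have h3 : ∑ v ∈ univ.filter (· ∈ L), w i v = 0 :=
    Finset.sum_eq_zero fun v hv => hinL i hi v (by simpa using hv)
  have h4 : ∑ v ∈ univ.filter (· ∉ L), w i v
      = ∑ v ∈ univ.filter (· ∉ L), (1 + if v ∈ S i then ε else 0) :=
    Finset.sum_congr rfl fun v hv => hcross i hi v (by simpa using hv)
  rw [h3, h4, zero_add, Finset.sum_add_distrib, Finset.sum_const]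
  have h5 : (∑ x ∈ univ.filter (· ∉ L), if x ∈ S i then ε else 0)
      = ε * (S i).ncard := by
    rw [← Finset.sum_filter, Finset.sum_const, nsmul_eq_mul, mul_comm]
    congr 2
    rw [ncard_eq_filter]
    congr 1
    ext a
    simp only [Finset.mem_filter, Finset.mem_univ, true_and, and_iff_right_iff_imp]
    intro ha
    exact hSR i hi ha
  rw [h5]
  simp [nsmul_eq_mul]

lemma singleton_of_counts {V : Type*} [Fintype V] (L Z : Set V)
    [DecidablePred (· ∈ Z)]
    (h1 : ((univ.filter (· ∈ Z)).filter (· ∈ L)).card = 1)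
    (h2 : ((univ.filter (· ∈ Z)).filter (· ∉ L)).card = 0) :
    ∃ i ∈ L, Z = {i} := by
  classical
  set Zf := univ.filter (· ∈ Z) with hZfdef
  have hc : Zf.card = 1 := by
    rw [← Finset.card_filter_add_card_filter_not (s := Zf) (p := (· ∈ L))]
    omega
  obtain ⟨i, hi⟩ := Finset.card_eq_one.1 hc
  have hiZf : i ∈ Zf := hi ▸ Finset.mem_singleton_self i
  have hiZ : i ∈ Z := by simpa [hZfdef] using hiZf
  have hiL : i ∈ L := by
    by_contra h
    have hmem : i ∈ Zf.filter (· ∉ L) := Finset.mem_filter.2 ⟨hiZf, h⟩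
    rw [Finset.card_eq_zero] at h2
    simp [h2] at hmem
  refine ⟨i, hiL, ?_⟩
  ext x
  simp only [Set.mem_singleton_iff]
  constructor
  · intro hx
    have : x ∈ Zf := by simp [hZfdef, hx]
    rw [hi] at this
    simpa using this
  · rintro rfl; exact hiZ

lemma master {V : Type*} [Fintype V] (n : ℕ) (hn8 : 8 ≤ n) (hn4 : 4 ∣ n)
    (hcard : Fintype.card V = n)
    (ε : ℝ) (hε0 : 0 < ε) (hε1 : ε ≤ 1)
    (L : Set V) (hL : L.ncard = 3 * n / 4)
    (S : V → Set V) (hSR : ∀ i ∈ L, S i ⊆ Lᶜ)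
    (w : V → V → ℝ) (hsymm : ∀ a b, w a b = w b a)
    (hinL : ∀ a ∈ L, ∀ b ∈ L, w a b = 0)
    (hinR : ∀ a ∉ L, ∀ b ∉ L, w a b = 0)
    (hcross : ∀ i ∈ L, ∀ j ∉ L, w i j = 1 + if j ∈ S i then ε else 0)
    (k : ℝ) (hk0 : 0 ≤ k) (hk4 : k ≤ (n:ℝ)/4)
    (hub : ∃ i ∈ L, ((S i).ncard : ℝ) = k)
    (hlb : ∀ i ∈ L, k ≤ ((S i).ncard : ℝ)) :
    IsLeast {y : ℝ | ∃ Z : Set V, Z ≠ ∅ ∧ Z ≠ Set.univ ∧ y = cutWeight w Z}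
      ((n : ℝ) / 4 + ε * k) := by
  classical
  have hLf : (univ.filter (· ∈ L)).card = 3 * n / 4 := by
    rw [← ncard_eq_filter]; exact hL
  have hLR : (univ.filter (· ∈ L)).card + (univ.filter (· ∉ L)).card = n := by
    rw [Finset.card_filter_add_card_filter_not, Finset.card_univ, hcard]
  have hRf : (univ.filter (· ∉ L)).card = n / 4 := by omega
  have hcast : ((n / 4 : ℕ) : ℝ) = (n : ℝ) / 4 := by
    obtain ⟨m, rfl⟩ := hn4
    rw [Nat.mul_div_cancel_left m (by norm_num)]
    push_cast; ring
  constructor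
  · obtain ⟨i, hiL, hik⟩ := hub
    refine ⟨{i}, Set.singleton_ne_empty i, ?_, ?_⟩
    · intro h
      have := congrArg Set.ncard h
      rw [Set.ncard_singleton, Set.ncard_univ, Nat.card_eq_fintype_card, hcard] at this
      omega
    · rw [cut_singleton ε L S hSR w hinL hcross i hiL, hRf, hcast, hik]
  · rintro y ⟨Z, hZne, hZuniv, rfl⟩
    set Zf := univ.filter (· ∈ Z) with hZfdef
    set a := (Zf.filter (· ∈ L)).card with hadef
    set b := (Zf.filter (· ∉ L)).card with hbdef
    set a' := (Zfᶜ.filter (· ∈ L)).card with ha'def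
    set b' := (Zfᶜ.filter (· ∉ L)).card with hb'def
    have haa' : a + a' = 3 * n / 4 := by
      rw [hadef, ha'def, filter_split_card]; exact hLf
    have hbb' : b + b' = n / 4 := by
      rw [hbdef, hb'def, filter_split_card]; exact hRf
    have hab : 1 ≤ a + b := by
      have h1 : a + b = Zf.card :=
        Finset.card_filter_add_card_filter_not (s := Zf) (p := (· ∈ L))
      obtain ⟨x, hx⟩ := Set.nonempty_iff_ne_empty.2 hZne
      have : x ∈ Zf := by simp [hZfdef, hx]
      have := Finset.card_pos.2 ⟨x, this⟩
      omega
    have ha'b' : 1 ≤ a' + b' := by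
      have h1 : a' + b' = Zfᶜ.card :=
        Finset.card_filter_add_card_filter_not (s := Zfᶜ) (p := (· ∈ L))
      obtain ⟨x, hx⟩ := Set.ne_univ_iff_exists_notMem Z |>.1 hZuniv
      have : x ∈ Zfᶜ := by simp [hZfdef, hx]
      have := Finset.card_pos.2 ⟨x, this⟩
      omega
    have hwge1 : ∀ u ∈ Zf.filter (· ∈ L), ∀ v ∈ Zfᶜ.filter (· ∉ L), 1 ≤ w u v := by
      intro u hu v hv
      rw [hcross u (Finset.mem_filter.1 hu).2 v (Finset.mem_filter.1 hv).2]
      split_ifs <;> linarith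
    have hwge1' : ∀ u ∈ Zf.filter (· ∉ L), ∀ v ∈ Zfᶜ.filter (· ∈ L), 1 ≤ w u v := by
      intro u hu v hv
      rw [hsymm u v, hcross v (Finset.mem_filter.1 hv).2 u (Finset.mem_filter.1 hu).2]
      split_ifs <;> linarith
    have hcut : ((a * b' + b * a' : ℕ) : ℝ) ≤ cutWeight w Z := by
      rw [cutWeight_eq_sum]
      have hsplit : ∑ u ∈ Zf, ∑ v ∈ Zfᶜ, w u v
          = (∑ u ∈ Zf.filter (· ∈ L), ∑ v ∈ Zfᶜ.filter (· ∉ L), w u v)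
          + (∑ u ∈ Zf.filter (· ∉ L), ∑ v ∈ Zfᶜ.filter (· ∈ L), w u v) := by
        rw [← Finset.sum_filter_add_sum_filter_not Zf (· ∈ L)]
        congr 1
        · refine Finset.sum_congr rfl fun u hu => ?_
          rw [← Finset.sum_filter_add_sum_filter_not Zfᶜ (· ∈ L)]
          have hz : ∑ v ∈ Zfᶜ.filter (· ∈ L), w u v = 0 :=
            Finset.sum_eq_zero fun v hv =>
              hinL u (Finset.mem_filter.1 hu).2 v (Finset.mem_filter.1 hv).2
          rw [hz, zero_add]
        · refine Finset.sum_congr rfl fun u hu => ?_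
          rw [← Finset.sum_filter_add_sum_filter_not Zfᶜ (· ∈ L)]
          have hz : ∑ v ∈ Zfᶜ.filter (· ∉ L), w u v = 0 :=
            Finset.sum_eq_zero fun v hv =>
              hinR u (Finset.mem_filter.1 hu).2 v (Finset.mem_filter.1 hv).2
          rw [hz, add_zero]
      rw [hsplit]
      have g1 := double_sum_ge _ _ w hwge1
      have g2 := double_sum_ge _ _ w hwge1'
      push_cast
      push_cast at g1 g2
      linarith
    have hmain : (a = 1 ∧ b = 0) ∨ (a' = 1 ∧ b' = 0) ∨ 2 * (n / 4) ≤ a * b' + b * a' := by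
      by_cases hb : b = 0
      · by_cases ha : a = 1
        · exact Or.inl ⟨ha, hb⟩
        · refine Or.inr (Or.inr ?_)
          have hb'' : b' = n / 4 := by omega
          have ha2 : 2 ≤ a := by omega
          calc 2 * (n / 4) ≤ a * b' := Nat.mul_le_mul ha2 hb''.ge
            _ ≤ a * b' + b * a' := Nat.le_add_right _ _
      · by_cases hb' : b' = 0
        · by_cases ha' : a' = 1
          · exact Or.inr (Or.inl ⟨ha', hb'⟩)
          · refine Or.inr (Or.inr ?_)
            have hb2 : b = n / 4 := by omega
            have ha2 : 2 ≤ a' := by omega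
            calc 2 * (n / 4) = (n / 4) * 2 := mul_comm _ _
              _ ≤ b * a' := Nat.mul_le_mul hb2.ge ha2
              _ ≤ a * b' + b * a' := Nat.le_add_left _ _
        · refine Or.inr (Or.inr ?_)
          have h1 : 1 ≤ b := by omega
          have h2 : 1 ≤ b' := by omega
          calc 2 * (n / 4) ≤ a + a' := by omega
            _ ≤ a * b' + b * a' := by
                have e1 : a * 1 ≤ a * b' := Nat.mul_le_mul le_rfl h2
                have e2 : 1 * a' ≤ b * a' := Nat.mul_le_mul h1 le_rfl
                omega
    have hεk : ε * k ≤ (n : ℝ) / 4 := by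
      calc ε * k ≤ 1 * ((n : ℝ) / 4) := by
            apply mul_le_mul hε1 hk4 hk0 zero_le_one
        _ = (n : ℝ) / 4 := one_mul _
    rcases hmain with ⟨ha, hb⟩ | ⟨ha', hb'⟩ | hge
    · obtain ⟨i, hiL, hZeq⟩ := singleton_of_counts L Z ha hb
      subst hZeq
      rw [cut_singleton ε L S hSR w hinL hcross i hiL, hRf, hcast]
      have := hlb i hiL
      have := mul_le_mul_of_nonneg_left this hε0.le
      linarith
    · have hc1 : ((univ.filter (· ∈ Zᶜ)).filter (· ∈ L)).card = 1 := by
        have : univ.filter (· ∈ Zᶜ) = Zfᶜ := by ext x; simp [hZfdef]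
        rw [this]; exact ha'
      have hc2 : ((univ.filter (· ∈ Zᶜ)).filter (· ∉ L)).card = 0 := by
        have : univ.filter (· ∈ Zᶜ) = Zfᶜ := by ext x; simp [hZfdef]
        rw [this]; exact hb'
      obtain ⟨i, hiL, hZeq⟩ := singleton_of_counts L Zᶜ hc1 hc2
      rw [← cutWeight_compl w hsymm Z, hZeq,
        cut_singleton ε L S hSR w hinL hcross i hiL, hRf, hcast]
      have := hlb i hiL
      have := mul_le_mul_of_nonneg_left this hε0.le
      linarith
    · have hge' : ((2 * (n / 4) : ℕ) : ℝ) ≤ ((a * b' + b * a' : ℕ) : ℝ) :=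
        Nat.cast_le.2 hge
      have h2 : ((2 * (n / 4) : ℕ) : ℝ) = (n : ℝ) / 2 := by
        push_cast [hcast]; ring
      rw [h2] at hge'
      linarith

open Classical in
theorem stmt_19 {V : Type*} [Fintype V] (n : ℕ) (hn8 : 8 ≤ n) (hn4 : 4 ∣ n)
    (hcard : Fintype.card V = n)
    (ε : ℝ) (hε0 : 0 < ε) (hε1 : ε ≤ 1)
    -- the bipartition `L ⊔ R` with `|L| = 3n/4`, `R = Lᶜ` of size `n/4`
    (L : Set V) (hL : L.ncard = 3 * n / 4)
    -- for each `i ∈ L`, the block `x^(i)` is encoded by the set `S i ⊆ R` of its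
    -- `(1+ε)`-weight neighbors; each block has Hamming weight `⌊n/8⌋ − 1` or `⌊n/8⌋ + 1`
    (S : V → Set V) (hSR : ∀ i ∈ L, S i ⊆ Lᶜ)
    (hSwt : ∀ i ∈ L, (S i).ncard = n / 8 - 1 ∨ (S i).ncard = n / 8 + 1)
    -- the weight function of `G_x`
    (w : V → V → ℝ) (hsymm : ∀ a b, w a b = w b a)
    (hinL : ∀ a ∈ L, ∀ b ∈ L, w a b = 0)
    (hinR : ∀ a ∉ L, ∀ b ∉ L, w a b = 0)
    (hcross : ∀ i ∈ L, ∀ j ∉ L, w i j = 1 + if j ∈ S i then ε else 0) :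
    -- if every block is in `Y` then `λ(G_x) = n/4 + ε(⌊n/8⌋ + 1)`
    ((∀ i ∈ L, (S i).ncard = n / 8 + 1) →
      IsLeast {y : ℝ | ∃ Z : Set V, Z ≠ ∅ ∧ Z ≠ Set.univ ∧ y = cutWeight w Z}
        ((n : ℝ) / 4 + ε * ((n / 8 : ℕ) + 1))) ∧
    -- if some block is in `X` then `λ(G_x) = n/4 + ε(⌊n/8⌋ − 1)`
    ((∃ i ∈ L, (S i).ncard = n / 8 - 1) →
      IsLeast {y : ℝ | ∃ Z : Set V, Z ≠ ∅ ∧ Z ≠ Set.univ ∧ y = cutWeight w Z}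
        ((n : ℝ) / 4 + ε * ((n / 8 : ℕ) - 1))) := by
  have hn81 : 1 ≤ n / 8 := by omega
  have h84 : n / 8 + 1 ≤ n / 4 := by omega
  have hq : ((n / 4 : ℕ) : ℝ) ≤ (n : ℝ) / 4 := by
    have := Nat.cast_div_le (α := ℝ) (m := n) (n := 4)
    simpa using this
  have hLne : L.Nonempty := by
    apply Set.nonempty_of_ncard_ne_zero
    omega
  constructor
  · intro hall
    apply master n hn8 hn4 hcard ε hε0 hε1 L hL S hSR w hsymm hinL hinR hcross
    · positivity
    · calc ((n / 8 : ℕ) : ℝ) + 1 = ((n / 8 + 1 : ℕ) : ℝ) := by push_cast; ring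
        _ ≤ ((n / 4 : ℕ) : ℝ) := Nat.cast_le.2 h84
        _ ≤ (n : ℝ) / 4 := hq
    · obtain ⟨i, hi⟩ := hLne
      exact ⟨i, hi, by rw [hall i hi]; push_cast; ring⟩
    · intro i hi
      rw [hall i hi]
      push_cast
      exact le_rfl
  · intro ⟨i0, hi0, hS0⟩
    apply master n hn8 hn4 hcard ε hε0 hε1 L hL S hSR w hsymm hinL hinR hcross
    · have : (1 : ℝ) ≤ ((n / 8 : ℕ) : ℝ) := by exact_mod_cast hn81
      linarith
    · have h1 : (n / 8 : ℕ) ≤ n / 4 := by omega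
      have := Nat.cast_le (α := ℝ) |>.2 h1
      linarith [hq]
    · refine ⟨i0, hi0, ?_⟩
      rw [hS0, Nat.cast_sub hn81]
      push_cast; ring
    · intro i hi
      rcases hSwt i hi with h | h
      · rw [h, Nat.cast_sub hn81]; push_cast; exact le_rfl
      · rw [h]; push_cast
        have : ((n / 8 : ℕ) : ℝ) - 1 ≤ ((n / 8 : ℕ) : ℝ) + 1 := by linarith
        exact this
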